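/- Let −3 < ϱ < 0, let b₀ : [−1,1] → [0,∞) be measurable with b₀(s) ≤ C₀·max(s,0) for all s and some C₀ > 0, let q > 0 and 0 < θ ≤ 2 (with 0 < q < 1 when θ = 2), and let ϑ ≥ 0. Then there exists C > 0, independent of t, such that for every t ≥ 0 and all measurable f₁, f₂ : ℝ³ → ℝ: sup_{v∈ℝ³} (1+|v|²)^{−ϱ/2} w_{q,θ,ϑ}(t,v) ∫_{ℝ³}∫_{S²} |v−u|^ϱ b₀(ω·(u−v)/|u−v|) √μ(u) ( |f₁(u′)| |f₂(v′)| + |f₁(u)| |f₂(v)| ) dω du ≤ C · (sup_v w_{q,θ,ϑ}(t,v)|f₁(v)|) · (sup_v w_{q,θ,ϑ}(t,v)|f₂(v)|). In particular, sup_v (1+|v|²)^{−ϱ/2} w_{q,θ,ϑ}(t,v) |Γ(f₁,f₂)(v)| is bounded by the same right-hand side. -/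

import Mathlib

open MeasureTheory

noncomputable section

/-- Velocity space `ℝ³`. -/
abbrev V3 : Type := EuclideanSpace ℝ (Fin 3)

/-- Normalized global Maxwellian `μ(v) = (2π)⁻¹ e^{-|v|²/2}`. -/
def maxwellian (v : V3) : ℝ := (2 * Real.pi)⁻¹ * Real.exp (-‖v‖ ^ 2 / 2)

/-- Post-collisional velocity `v′ = v + ((u-v)·ω)ω`. -/
def vPost (u v ω : V3) : V3 := v + (inner ℝ (u - v) ω : ℝ) • ω

/-- Post-collisional velocity `u′ = u - ((u-v)·ω)ω`. -/
def uPost (u v ω : V3) : V3 := u - (inner ℝ (u - v) ω : ℝ) • ω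

/-- Time–velocity weight `w_{q,θ,ϑ}(t,v) = exp(q|v|^θ/8 + q|v|^θ/(8(1+t)^ϑ))`. -/
def wt (q θ ϑ t : ℝ) (v : V3) : ℝ :=
  Real.exp (q * ‖v‖ ^ θ / 8 + q * ‖v‖ ^ θ / (8 * (1 + t) ^ ϑ))

/-- Surface measure on the unit sphere `S² ⊂ ℝ³`. -/
def sphMeasure : Measure (Metric.sphere (0 : V3) 1) := (volume : Measure V3).toSphere

/-- Nonlinear Boltzmann collision operator in the perturbation variable,
`Γ(f₁,f₂)(v) = ∫∫ |v-u|^ϱ b₀(cos θ) √μ(u) [f₁(u′)f₂(v′) - f₁(u)f₂(v)] dω du`. -/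
def GamOp (ϱ : ℝ) (b₀ : ℝ → ℝ) (f₁ f₂ : V3 → ℝ) (v : V3) : ℝ :=
  ∫ u : V3, ∫ ω : Metric.sphere (0 : V3) 1,
      ‖v - u‖ ^ ϱ * b₀ ((inner ℝ (ω : V3) (u - v) : ℝ) / ‖u - v‖) *
        Real.sqrt (maxwellian u) *
        (f₁ (uPost u v (ω : V3)) * f₂ (vPost u v (ω : V3)) - f₁ u * f₂ v) ∂sphMeasure


set_option maxHeartbeats 1000000
open Metric Set

section aux

lemma real_rpow_add_le (a b : ℝ) (ha : 0 ≤ a) (hb : 0 ≤ b) {p : ℝ} (hp0 : 0 ≤ p) (hp1 : p ≤ 1) :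
    (a + b) ^ p ≤ a ^ p + b ^ p := by
  have h := NNReal.rpow_add_le_add_rpow a.toNNReal b.toNNReal hp0 hp1
  have h2 := NNReal.coe_le_coe.mpr h
  push_cast at h2
  rwa [Real.coe_toNNReal a ha, Real.coe_toNNReal b hb] at h2

lemma energy_id (u v ω : V3) (hω : ‖ω‖ = 1) :
    ‖uPost u v ω‖ ^ 2 + ‖vPost u v ω‖ ^ 2 = ‖u‖ ^ 2 + ‖v‖ ^ 2 := by
  set c : ℝ := (inner ℝ (u - v) ω : ℝ) with hc
  have h1 : ‖vPost u v ω‖ ^ 2 = ‖v‖ ^ 2 + 2 * (c * (inner ℝ v ω : ℝ)) + c ^ 2 := by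
    rw [vPost, ← hc, norm_add_sq_real, norm_smul, real_inner_smul_right]
    simp [hω, mul_pow, abs_mul_abs_self, sq_abs]
  have h2 : ‖uPost u v ω‖ ^ 2 = ‖u‖ ^ 2 - 2 * (c * (inner ℝ u ω : ℝ)) + c ^ 2 := by
    rw [uPost, ← hc, norm_sub_sq_real, norm_smul, real_inner_smul_right]
    simp [hω, mul_pow, abs_mul_abs_self, sq_abs]
  have h3 : c = (inner ℝ u ω : ℝ) - (inner ℝ v ω : ℝ) := by rw [hc, inner_sub_left]
  rw [h1, h2, h3]; ring

lemma norm_rpow_le_post (θ : ℝ) (h0 : 0 < θ) (h2 : θ ≤ 2) (u v ω : V3) (hω : ‖ω‖ = 1) :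
    ‖v‖ ^ θ ≤ ‖uPost u v ω‖ ^ θ + ‖vPost u v ω‖ ^ θ := by
  have e := energy_id u v ω hω
  have h1 : ‖v‖ ^ θ = (‖v‖ ^ 2) ^ (θ / 2) := by
    rw [← Real.rpow_natCast ‖v‖ 2, ← Real.rpow_mul (norm_nonneg v)]
    congr 1; push_cast; ring
  have h4 : ∀ x : V3, (‖x‖ ^ 2) ^ (θ / 2) = ‖x‖ ^ θ := by
    intro x
    rw [← Real.rpow_natCast ‖x‖ 2, ← Real.rpow_mul (norm_nonneg x)]
    congr 1; push_cast; ring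
  calc ‖v‖ ^ θ = (‖v‖ ^ 2) ^ (θ / 2) := h1
    _ ≤ (‖uPost u v ω‖ ^ 2 + ‖vPost u v ω‖ ^ 2) ^ (θ / 2) := by
        apply Real.rpow_le_rpow (by positivity) _ (by positivity)
        nlinarith [sq_nonneg ‖uPost u v ω‖]
    _ ≤ (‖uPost u v ω‖ ^ 2) ^ (θ / 2) + (‖vPost u v ω‖ ^ 2) ^ (θ / 2) :=
        real_rpow_add_le _ _ (by positivity) (by positivity) (by positivity) (by linarith)
    _ = _ := by rw [h4, h4]

lemma sqrt_maxwellian_le (u : V3) : Real.sqrt (maxwellian u) ≤ Real.exp (-‖u‖ ^ 2 / 4) := by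
  have h1 : maxwellian u ≤ Real.exp (-‖u‖ ^ 2 / 2) := by
    rw [maxwellian]
    have : (2 * Real.pi)⁻¹ ≤ 1 := by
      rw [inv_le_one_iff₀]; right; nlinarith [Real.pi_gt_three]
    nlinarith [Real.exp_pos (-‖u‖ ^ 2 / 2)]
  calc Real.sqrt (maxwellian u) ≤ Real.sqrt (Real.exp (-‖u‖ ^ 2 / 2)) := Real.sqrt_le_sqrt h1
    _ = Real.exp (-‖u‖ ^ 2 / 2 / 2) := (Real.exp_half _).symm
    _ = Real.exp (-‖u‖ ^ 2 / 4) := by ring_nf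


variable {ϱ : ℝ}

lemma meas_rpow_norm : Measurable fun z : V3 => ‖z‖ ^ ϱ :=
  measurable_norm.pow_const ϱ

example : (Module.finrank ℝ V3) = 3 := finrank_euclideanSpace_fin

lemma integrableOn_norm_rpow_ball1 (h1 : -3 < ϱ) (h2 : ϱ < 0) :
    IntegrableOn (fun z : V3 => ‖z‖ ^ ϱ) (ball 0 1) := by
  have hϱ : ϱ ≠ 0 := ne_of_lt h2
  have hmeas : Measurable fun z : V3 => ‖z‖ ^ ϱ := measurable_norm.pow_const ϱ
  refine ⟨hmeas.aestronglyMeasurable.restrict, ?_⟩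
  have hnn : ∀ z : V3, 0 ≤ ‖z‖ ^ ϱ := fun z => Real.rpow_nonneg (norm_nonneg z) ϱ
  rw [HasFiniteIntegral, lintegral_enorm_of_nonneg hnn]
  rw [lintegral_eq_lintegral_meas_le _ (ae_of_all _ hnn) hmeas.aemeasurable]
  set ν := (volume : Measure V3).restrict (ball 0 1) with hν
  set f := fun t : ℝ => ν {a : V3 | t ≤ ‖a‖ ^ ϱ} with hf
  have hsplit : ∫⁻ t in Ioi (0:ℝ), f t ≤ (∫⁻ t in Ioc (0:ℝ) 1, f t) + ∫⁻ t in Ioi (1:ℝ), f t :=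
    le_trans (lintegral_mono_set Ioi_subset_Ioc_union_Ioi) (lintegral_union_le _ _ _)
  refine lt_of_le_of_lt hsplit (ENNReal.add_lt_top.2 ⟨?_, ?_⟩)
  · have hb : ∀ t ∈ Ioc (0:ℝ) 1, f t ≤ volume (ball (0:V3) 1) := by
      intro t _
      calc f t ≤ ν univ := measure_mono (subset_univ _)
        _ = volume (ball (0:V3) 1) := by rw [hν, Measure.restrict_apply_univ]
    calc ∫⁻ t in Ioc (0:ℝ) 1, f t ≤ ∫⁻ _ in Ioc (0:ℝ) 1, volume (ball (0:V3) 1) :=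
          setLIntegral_mono' measurableSet_Ioc hb
      _ = volume (ball (0:V3) 1) * volume (Ioc (0:ℝ) 1) := setLIntegral_const _ _
      _ < ⊤ := by
          refine ENNReal.mul_lt_top measure_ball_lt_top ?_
          simp [Real.volume_Ioc]
  · have hsub : ∀ t ∈ Ioi (1:ℝ), {a : V3 | t ≤ ‖a‖ ^ ϱ} ⊆ closedBall 0 (t ^ ϱ⁻¹) := by
      intro t ht a ha
      simp only [mem_setOf_eq] at ha
      have hna : (0:ℝ) < ‖a‖ := by
        rcases eq_or_lt_of_le (norm_nonneg a) with h | h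
        · exfalso
          rw [← h, Real.zero_rpow hϱ] at ha
          linarith [ht.out]
        · exact h
      have h3 : (‖a‖ ^ ϱ) ^ ϱ⁻¹ ≤ t ^ ϱ⁻¹ :=
        Real.rpow_le_rpow_of_nonpos (by linarith [ht.out]) ha (inv_nonpos.mpr h2.le)
      rw [← Real.rpow_mul hna.le, mul_inv_cancel₀ hϱ, Real.rpow_one] at h3
      exact mem_closedBall_zero_iff.mpr h3
    have hbound : ∀ t ∈ Ioi (1:ℝ), f t ≤
        ENNReal.ofReal (t ^ (ϱ⁻¹ * 3)) * volume (ball (0:V3) 1) := by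
      intro t ht
      have h4 : f t ≤ volume (closedBall (0:V3) (t ^ ϱ⁻¹)) := by
        calc f t ≤ volume {a : V3 | t ≤ ‖a‖ ^ ϱ} := Measure.restrict_le_self _
          _ ≤ _ := measure_mono (hsub t ht)
      have h5 : volume (closedBall (0:V3) (t ^ ϱ⁻¹)) =
          ENNReal.ofReal ((t ^ ϱ⁻¹) ^ Module.finrank ℝ V3) * volume (ball (0:V3) 1) :=
        Measure.addHaar_closedBall _ _ (Real.rpow_nonneg (by linarith [ht.out]) _)
      have h6 : (t ^ ϱ⁻¹) ^ (3:ℕ) = t ^ (ϱ⁻¹ * 3) := by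
        rw [← Real.rpow_natCast (t ^ ϱ⁻¹) 3, ← Real.rpow_mul (by linarith [ht.out] : (0:ℝ) ≤ t)]
        norm_num
      rw [finrank_euclideanSpace_fin, h6] at h5
      rw [h5] at h4
      exact h4
    have hexp : ϱ⁻¹ * 3 < -1 := by
      rw [inv_mul_eq_div, div_lt_iff_of_neg h2]
      linarith
    calc ∫⁻ t in Ioi (1:ℝ), f t
        ≤ ∫⁻ t in Ioi (1:ℝ), ENNReal.ofReal (t ^ (ϱ⁻¹ * 3)) * volume (ball (0:V3) 1) :=
          setLIntegral_mono' measurableSet_Ioi hbound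
      _ = (∫⁻ t in Ioi (1:ℝ), ENNReal.ofReal (t ^ (ϱ⁻¹ * 3))) * volume (ball (0:V3) 1) :=
          lintegral_mul_const' _ _ measure_ball_lt_top.ne
      _ < ⊤ := by
          refine ENNReal.mul_lt_top ?_ measure_ball_lt_top
          exact (integrableOn_Ioi_rpow_of_lt hexp one_pos).setLIntegral_lt_top

lemma intGauss : Integrable (fun u : V3 => Real.exp (-‖u‖ ^ 2 / 4)) := by
  have hint : Integrable (fun x : V3 => Real.exp 20 * (1 + ‖x‖) ^ (-(4:ℝ))) :=
    (integrable_one_add_norm (by rw [finrank_euclideanSpace_fin]; norm_num)).const_mul _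
  refine hint.mono' ?_ (ae_of_all _ fun u => ?_)
  · exact (Real.continuous_exp.comp (by continuity)).aestronglyMeasurable
  · rw [Real.norm_eq_abs, abs_of_nonneg (Real.exp_pos _).le]
    set x := ‖u‖ with hx
    have hx0 : 0 ≤ x := norm_nonneg u
    have key : (1 + x) ^ (4:ℝ) ≤ Real.exp 20 * Real.exp (x ^ 2 / 4) := by
      have h1 : (1 + x) ^ (4:ℝ) = Real.exp ((4:ℝ) * Real.log (1 + x)) := by
        rw [Real.rpow_def_of_pos (by linarith), mul_comm]
      rw [h1, ← Real.exp_add]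
      apply Real.exp_le_exp.mpr
      have h2 : Real.log (1 + x) ≤ x := by
        have := Real.log_le_sub_one_of_pos (show (0:ℝ) < 1 + x by linarith)
        linarith
      nlinarith [sq_nonneg (x - 8)]
    have hpos : (0:ℝ) < (1 + x) ^ (4:ℝ) := Real.rpow_pos_of_pos (by linarith) _
    rw [Real.rpow_neg (by linarith : (0:ℝ) ≤ 1 + x)]
    have heq : Real.exp (-x ^ 2 / 4) = Real.exp 20 * (Real.exp 20 * Real.exp (x ^ 2 / 4))⁻¹ := by
      rw [mul_inv, ← mul_assoc, mul_inv_cancel₀ (Real.exp_ne_zero _), one_mul, ← Real.exp_neg]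
      congr 1; ring
    rw [heq]
    gcongr

lemma integrableOn_norm_rpow_ballR (h1 : -3 < ϱ) (h2 : ϱ < 0) (R : ℝ) :
    IntegrableOn (fun z : V3 => ‖z‖ ^ ϱ) (ball 0 R) := by
  have hsub : ball (0:V3) R ⊆ ball 0 1 ∪ (ball 0 R \ ball 0 1) := by
    intro z hz
    by_cases h : z ∈ ball (0:V3) 1
    · exact Or.inl h
    · exact Or.inr ⟨hz, h⟩
  refine IntegrableOn.mono_set ?_ hsub
  refine IntegrableOn.union (integrableOn_norm_rpow_ball1 h1 h2) ?_
  have hmeas : MeasurableSet (ball (0:V3) R \ ball 0 1) :=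
    measurableSet_ball.diff measurableSet_ball
  have hc : IntegrableOn (fun _ : V3 => (1:ℝ)) (ball 0 R \ ball 0 1) volume :=
    (integrableOn_const_iff).mpr (Or.inr (lt_of_le_of_lt (measure_mono diff_subset) measure_ball_lt_top))
  refine Integrable.mono' hc
    ((measurable_norm.pow_const ϱ).aestronglyMeasurable.restrict) ?_
  · rw [ae_restrict_iff' hmeas]
    refine ae_of_all _ fun z hz => ?_
    rw [Real.norm_eq_abs, abs_of_nonneg (Real.rpow_nonneg (norm_nonneg z) ϱ)]
    refine Real.rpow_le_one_of_one_le_of_nonpos ?_ h2.le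
    have := hz.2
    simp only [mem_ball, dist_zero_right, not_lt] at this
    exact this

lemma integrable_indicator_trans (h1 : -3 < ϱ) (h2 : ϱ < 0) (v : V3) (R : ℝ) :
    Integrable (fun u : V3 => indicator (ball v R) (fun u => ‖v - u‖ ^ ϱ) u) := by
  have hfun : (fun u : V3 => indicator (ball v R) (fun u => ‖v - u‖ ^ ϱ) u) =
      fun u : V3 => indicator (ball (0:V3) R) (fun z => ‖z‖ ^ ϱ) (v - u) := by
    funext u
    by_cases h : u ∈ ball v R
    · have h' : v - u ∈ ball (0:V3) R := by
        rw [mem_ball_zero_iff]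
        rw [mem_ball, dist_eq_norm, ← norm_sub_rev] at h
        exact h
      rw [indicator_of_mem h, indicator_of_mem h']
    · have h' : v - u ∉ ball (0:V3) R := by
        rw [mem_ball_zero_iff]
        rw [mem_ball, dist_eq_norm, ← norm_sub_rev] at h
        exact h
      rw [indicator_of_notMem h, indicator_of_notMem h']
  rw [hfun]
  exact ((integrableOn_norm_rpow_ballR h1 h2 R).integrable_indicator 
    measurableSet_ball).comp_sub_left v

lemma integrable_majorant (h1 : -3 < ϱ) (h2 : ϱ < 0) (v : V3) :
    Integrable (fun u : V3 => ‖v - u‖ ^ ϱ * Real.exp (-‖u‖ ^ 2 / 4)) := by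
  have hint : Integrable (fun u : V3 =>
      indicator (ball v 1) (fun u => ‖v - u‖ ^ ϱ) u + Real.exp (-‖u‖ ^ 2 / 4)) :=
    (integrable_indicator_trans h1 h2 v 1).add intGauss
  refine hint.mono' ?_ (ae_of_all _ fun u => ?_)
  · apply Measurable.aestronglyMeasurable
    exact ((measurable_norm.comp (measurable_const.sub measurable_id)).pow_const ϱ).mul 
      (by fun_prop)
  · have ha : (0:ℝ) ≤ ‖v - u‖ ^ ϱ := Real.rpow_nonneg (norm_nonneg _) _
    have he : Real.exp (-‖u‖ ^ 2 / 4) ≤ 1 := Real.exp_le_one_iff.mpr (by nlinarith [sq_nonneg ‖u‖])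
    rw [Real.norm_eq_abs, abs_of_nonneg (by positivity)]
    by_cases h : u ∈ ball v 1
    · rw [indicator_of_mem h]
      have hm : ‖v - u‖ ^ ϱ * Real.exp (-‖u‖ ^ 2 / 4) ≤ ‖v - u‖ ^ ϱ :=
        mul_le_of_le_one_right ha he
      linarith [Real.exp_pos (-‖u‖ ^ 2 / 4)]
    · rw [indicator_of_notMem h]
      have hn : (1:ℝ) ≤ ‖v - u‖ := by
        rw [mem_ball, dist_eq_norm, ← norm_sub_rev, not_lt] at h
        exact h
      have hr1 : ‖v - u‖ ^ ϱ ≤ 1 := Real.rpow_le_one_of_one_le_of_nonpos hn h2.le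
      have hm : ‖v - u‖ ^ ϱ * Real.exp (-‖u‖ ^ 2 / 4) ≤ 1 * Real.exp (-‖u‖ ^ 2 / 4) := by
        apply mul_le_mul_of_nonneg_right hr1 (Real.exp_pos _).le
      linarith

lemma indicator_trans_eq (ϱ : ℝ) (v : V3) (R : ℝ) :
    (fun u : V3 => indicator (ball v R) (fun u => ‖v - u‖ ^ ϱ) u) =
      fun u : V3 => indicator (ball (0:V3) R) (fun z => ‖z‖ ^ ϱ) (v - u) := by
  funext u
  by_cases h : u ∈ ball v R
  · have h' : v - u ∈ ball (0:V3) R := by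
      rw [mem_ball_zero_iff]
      rw [mem_ball, dist_eq_norm, ← norm_sub_rev] at h
      exact h
    rw [indicator_of_mem h, indicator_of_mem h']
  · have h' : v - u ∉ ball (0:V3) R := by
      rw [mem_ball_zero_iff]
      rw [mem_ball, dist_eq_norm, ← norm_sub_rev] at h
      exact h
    rw [indicator_of_notMem h, indicator_of_notMem h']

lemma key_decay (h1 : -3 < ϱ) (h2 : ϱ < 0) :
    ∃ K : ℝ, 0 < K ∧ ∀ v : V3,
      (1 + ‖v‖ ^ 2) ^ (-ϱ / 2) *
        ∫ u : V3, ‖v - u‖ ^ ϱ * Real.exp (-‖u‖ ^ 2 / 4) ≤ K := by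
  set c₁ : ℝ := ∫ z : V3, indicator (ball 0 1) (fun z => ‖z‖ ^ ϱ) z with hc₁
  set vol1 : ℝ := (volume (ball (0:V3) 1)).toReal with hvol1
  set I₂ : ℝ := ∫ u : V3, Real.exp (-‖u‖ ^ 2 / 4) with hI₂
  have hc₁0 : 0 ≤ c₁ := integral_nonneg fun z =>
    indicator_nonneg (fun z _ => Real.rpow_nonneg (norm_nonneg z) ϱ) z
  have hvol10 : 0 ≤ vol1 := ENNReal.toReal_nonneg
  have hI₂0 : 0 ≤ I₂ := integral_nonneg fun u => (Real.exp_pos _).le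
  refine ⟨(c₁ + vol1) * Real.exp (4 * (3 - ϱ + 1/4) ^ 2) + 2 ^ (-ϱ) * I₂ + 1, ?_, ?_⟩
  · have : (0:ℝ) ≤ (c₁ + vol1) * Real.exp (4 * (3 - ϱ + 1/4) ^ 2) := by positivity
    have : (0:ℝ) ≤ 2 ^ (-ϱ) * I₂ := by positivity
    positivity
  intro v
  set x : ℝ := ‖v‖ with hxdef
  have hx0 : 0 ≤ x := norm_nonneg v
  set s : ℝ := 1 + x with hsdef
  have hs1 : 1 ≤ s := by simp [hsdef]; linarith
  have hs0 : (0:ℝ) < s := by linarith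
  set R : ℝ := s / 2 with hRdef
  have hR0 : (0:ℝ) < R := by positivity
  set m : ℝ := max ((x - 1) / 2) 0 with hmdef
  have hm0 : 0 ≤ m := le_max_right _ _
  set g₁ : V3 → ℝ :=
    fun u => Real.exp (-m ^ 2 / 4) * indicator (ball v R) (fun u => ‖v - u‖ ^ ϱ) u with hg₁
  set g₂ : V3 → ℝ := fun u => R ^ ϱ * Real.exp (-‖u‖ ^ 2 / 4) with hg₂
  have hg₁int : Integrable g₁ := (integrable_indicator_trans h1 h2 v R).const_mul _
  have hg₂int : Integrable g₂ := intGauss.const_mul _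
  have hpt : ∀ u : V3, ‖v - u‖ ^ ϱ * Real.exp (-‖u‖ ^ 2 / 4) ≤ g₁ u + g₂ u := by
    intro u
    have ha : (0:ℝ) ≤ ‖v - u‖ ^ ϱ := Real.rpow_nonneg (norm_nonneg _) _
    by_cases hu : u ∈ ball v R
    · have hmu : m ≤ ‖u‖ := by
        refine max_le ?_ (norm_nonneg u)
        have hd : ‖v - u‖ < R := by rw [mem_ball, dist_eq_norm, ← norm_sub_rev] at hu; exact hu
        have := norm_sub_norm_le v u
        rw [← hxdef] at this
        rw [hRdef, hsdef] at hd
        linarith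
      have hexp : Real.exp (-‖u‖ ^ 2 / 4) ≤ Real.exp (-m ^ 2 / 4) := by
        apply Real.exp_le_exp.mpr
        have : m ^ 2 ≤ ‖u‖ ^ 2 := pow_le_pow_left₀ hm0 hmu 2
        linarith
      have h3 : ‖v - u‖ ^ ϱ * Real.exp (-‖u‖ ^ 2 / 4) ≤ g₁ u := by
        simp only [hg₁, indicator_of_mem hu]
        calc ‖v - u‖ ^ ϱ * Real.exp (-‖u‖ ^ 2 / 4) ≤ ‖v - u‖ ^ ϱ * Real.exp (-m ^ 2 / 4) :=
              mul_le_mul_of_nonneg_left hexp ha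
          _ = Real.exp (-m ^ 2 / 4) * ‖v - u‖ ^ ϱ := by ring
      have h4 : (0:ℝ) ≤ g₂ u := by
        have : g₂ u = R ^ ϱ * Real.exp (-‖u‖ ^ 2 / 4) := rfl
        rw [this]; positivity
      linarith
    · have hd : R ≤ ‖v - u‖ := by
        rw [mem_ball, dist_eq_norm, ← norm_sub_rev, not_lt] at hu; exact hu
      have h3 : ‖v - u‖ ^ ϱ ≤ R ^ ϱ := Real.rpow_le_rpow_of_nonpos hR0 hd h2.le
      have h4 : g₁ u = 0 := by
        simp only [hg₁, indicator_of_notMem hu, mul_zero]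
      rw [h4, zero_add]
      show ‖v - u‖ ^ ϱ * Real.exp (-‖u‖ ^ 2 / 4) ≤ R ^ ϱ * Real.exp (-‖u‖ ^ 2 / 4)
      exact mul_le_mul_of_nonneg_right h3 (Real.exp_pos _).le
  set J : ℝ := ∫ u : V3, ‖v - u‖ ^ ϱ * Real.exp (-‖u‖ ^ 2 / 4) with hJ
  have hJ0 : 0 ≤ J := integral_nonneg fun u => by positivity
  -- bound on the translated indicator integral
  have hind : ∫ u : V3, indicator (ball v R) (fun u => ‖v - u‖ ^ ϱ) u ≤ c₁ + R ^ 3 * vol1 := by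
    rw [indicator_trans_eq ϱ v R, integral_sub_left_eq_self _ _ v]
    have hmaj : ∀ z : V3, indicator (ball (0:V3) R) (fun z => ‖z‖ ^ ϱ) z ≤
        indicator (ball (0:V3) 1) (fun z => ‖z‖ ^ ϱ) z +
          indicator (ball (0:V3) R) (fun _ => (1:ℝ)) z := by
      intro z
      have hz0 : (0:ℝ) ≤ ‖z‖ ^ ϱ := Real.rpow_nonneg (norm_nonneg z) ϱ
      by_cases hzR : z ∈ ball (0:V3) R
      · rw [indicator_of_mem hzR (fun z => ‖z‖ ^ ϱ), indicator_of_mem hzR (fun _ => (1:ℝ))]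
        by_cases hz1 : z ∈ ball (0:V3) 1
        · rw [indicator_of_mem hz1]
          linarith
        · rw [indicator_of_notMem hz1]
          have hn1 : (1:ℝ) ≤ ‖z‖ := by
            rw [mem_ball_zero_iff, not_lt] at hz1; exact hz1
          have := Real.rpow_le_one_of_one_le_of_nonpos hn1 h2.le
          linarith
      · rw [indicator_of_notMem hzR (fun z => ‖z‖ ^ ϱ),
          indicator_of_notMem hzR (fun _ => (1:ℝ))]
        simpa using indicator_nonneg (fun z _ => Real.rpow_nonneg (norm_nonneg z) ϱ) z
    have hintR : Integrable (fun z : V3 => indicator (ball (0:V3) 1) (fun z => ‖z‖ ^ ϱ) z +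
        indicator (ball (0:V3) R) (fun _ => (1:ℝ)) z) := by
      refine Integrable.add ?_ ?_
      · exact (integrableOn_norm_rpow_ball1 h1 h2).integrable_indicator measurableSet_ball
      · exact ((integrableOn_const_iff).mpr (Or.inr measure_ball_lt_top)).integrable_indicator
          measurableSet_ball
    calc ∫ z : V3, indicator (ball (0:V3) R) (fun z => ‖z‖ ^ ϱ) z
        ≤ ∫ z : V3, (indicator (ball (0:V3) 1) (fun z => ‖z‖ ^ ϱ) z +
            indicator (ball (0:V3) R) (fun _ => (1:ℝ)) z) :=
          integral_mono_of_nonneg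
            (ae_of_all _ fun z => indicator_nonneg (fun z _ => Real.rpow_nonneg (norm_nonneg z) ϱ) z)
            hintR (ae_of_all _ hmaj)
      _ = c₁ + ∫ z : V3, indicator (ball (0:V3) R) (fun _ => (1:ℝ)) z := by
          rw [integral_add
            ((integrableOn_norm_rpow_ball1 h1 h2).integrable_indicator measurableSet_ball)
            (((integrableOn_const_iff).mpr (Or.inr measure_ball_lt_top)).integrable_indicator
              measurableSet_ball), hc₁]
      _ = c₁ + (volume (ball (0:V3) R)).toReal := by
          rw [integral_indicator_const _ measurableSet_ball, smul_eq_mul, mul_one]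
          rfl
      _ = c₁ + R ^ 3 * vol1 := by
          rw [Measure.addHaar_ball _ _ hR0.le, finrank_euclideanSpace_fin, ENNReal.toReal_mul,
            ENNReal.toReal_ofReal (by positivity), hvol1]
  have hJle : J ≤ Real.exp (-m ^ 2 / 4) * (c₁ + R ^ 3 * vol1) + R ^ ϱ * I₂ := by
    calc J ≤ ∫ u : V3, (g₁ u + g₂ u) :=
          integral_mono_of_nonneg (ae_of_all _ fun u => by positivity)
            (hg₁int.add hg₂int) (ae_of_all _ hpt)
      _ = (∫ u : V3, g₁ u) + ∫ u : V3, g₂ u := integral_add hg₁int hg₂int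
      _ = Real.exp (-m ^ 2 / 4) * (∫ u : V3, indicator (ball v R) (fun u => ‖v - u‖ ^ ϱ) u) +
            R ^ ϱ * I₂ := by
          rw [hg₁, hg₂, integral_const_mul, integral_const_mul, hI₂]
      _ ≤ _ := by
          have := hind
          have h5 : (0:ℝ) < Real.exp (-m ^ 2 / 4) := Real.exp_pos _
          nlinarith
  -- prefactor estimate
  have hP : (1 + ‖v‖ ^ 2) ^ (-ϱ / 2) ≤ s ^ (-ϱ) := by
    have h1x : (1 + x ^ 2 : ℝ) ≤ s ^ (2:ℕ) := by
      rw [hsdef]; nlinarith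
    have h6 : ((1:ℝ) + ‖v‖ ^ 2) ^ (-ϱ / 2) ≤ ((s:ℝ) ^ (2:ℕ)) ^ (-ϱ / 2) := by
      rw [← hxdef]
      exact Real.rpow_le_rpow (by positivity) h1x (by linarith)
    have h7 : ((s:ℝ) ^ (2:ℕ)) ^ (-ϱ / 2) = s ^ (-ϱ) := by
      rw [← Real.rpow_natCast s 2, ← Real.rpow_mul hs0.le]
      congr 1; push_cast; ring
    rw [h7] at h6
    exact h6
  have hsϱ0 : (0:ℝ) ≤ s ^ (-ϱ) := (Real.rpow_pos_of_pos hs0 _).le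
  have hmain : (1 + ‖v‖ ^ 2) ^ (-ϱ / 2) * J ≤
      s ^ (-ϱ) * (Real.exp (-m ^ 2 / 4) * (c₁ + R ^ 3 * vol1) + R ^ ϱ * I₂) :=
    mul_le_mul hP hJle hJ0 hsϱ0
  -- part 2 : the tail term
  have hpart2 : s ^ (-ϱ) * (R ^ ϱ * I₂) = 2 ^ (-ϱ) * I₂ := by
    have hsne : s ^ ϱ ≠ 0 := (Real.rpow_pos_of_pos hs0 _).ne'
    rw [hRdef, Real.div_rpow hs0.le (by norm_num : (0:ℝ) ≤ 2), Real.rpow_neg hs0.le,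
      Real.rpow_neg (by norm_num : (0:ℝ) ≤ 2)]
    field_simp
  -- part 1 : the main term
  have hss : s ^ (-ϱ) * s ^ (3:ℕ) ≤ Real.exp ((3 - ϱ) * s) := by
    have hlog : Real.log s ≤ s := by
      have := Real.log_le_sub_one_of_pos hs0
      linarith
    have l1 : s ^ (-ϱ) ≤ Real.exp (-ϱ * s) := by
      rw [Real.rpow_def_of_pos hs0]
      apply Real.exp_le_exp.mpr
      have : Real.log s * -ϱ ≤ s * -ϱ := mul_le_mul_of_nonneg_right hlog (by linarith)
      linarith
    have l2 : s ^ (3:ℕ) ≤ Real.exp (3 * s) := by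
      have hse : s = Real.exp (Real.log s) := (Real.exp_log hs0).symm
      calc s ^ (3:ℕ) = Real.exp (Real.log s) ^ (3:ℕ) := by rw [← hse]
        _ = Real.exp ((3:ℕ) * Real.log s) := by rw [← Real.exp_nat_mul]
        _ ≤ Real.exp (3 * s) := by
            apply Real.exp_le_exp.mpr
            push_cast
            nlinarith [Real.log_le_sub_one_of_pos hs0]
    calc s ^ (-ϱ) * s ^ (3:ℕ) ≤ Real.exp (-ϱ * s) * Real.exp (3 * s) :=
          mul_le_mul l1 l2 (by positivity) (Real.exp_pos _).le
      _ = Real.exp ((3 - ϱ) * s) := by rw [← Real.exp_add]; congr 1; ring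
  have hmexp : Real.exp (-m ^ 2 / 4) ≤ Real.exp (1/4 - (s - 2) ^ 2 / 16) := by
    apply Real.exp_le_exp.mpr
    rcases le_or_gt 1 x with hx1 | hx1
    · have : m = (x - 1) / 2 := max_eq_left (by linarith)
      rw [this, hsdef]
      nlinarith
    · have : m = 0 := max_eq_right (by linarith)
      rw [this, hsdef]
      nlinarith
  have hcv : c₁ + R ^ 3 * vol1 ≤ (c₁ + vol1) * s ^ (3:ℕ) := by
    have hs3 : (1:ℝ) ≤ s ^ (3:ℕ) := one_le_pow₀ hs1
    have hc : c₁ ≤ c₁ * s ^ (3:ℕ) := le_mul_of_one_le_right hc₁0 hs3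
    have hRs : R ^ (3:ℕ) ≤ s ^ (3:ℕ) := by
      apply pow_le_pow_left₀ hR0.le
      rw [hRdef]; linarith
    have h8 : R ^ (3:ℕ) * vol1 ≤ s ^ (3:ℕ) * vol1 := mul_le_mul_of_nonneg_right hRs hvol10
    nlinarith [hc, h8]
  have hpart1 : s ^ (-ϱ) * (Real.exp (-m ^ 2 / 4) * (c₁ + R ^ 3 * vol1)) ≤
      (c₁ + vol1) * Real.exp (4 * (3 - ϱ + 1/4) ^ 2) := by
    calc s ^ (-ϱ) * (Real.exp (-m ^ 2 / 4) * (c₁ + R ^ 3 * vol1))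
        ≤ s ^ (-ϱ) * (Real.exp (-m ^ 2 / 4) * ((c₁ + vol1) * s ^ (3:ℕ))) := by
          apply mul_le_mul_of_nonneg_left _ hsϱ0
          exact mul_le_mul_of_nonneg_left hcv (Real.exp_pos _).le
      _ = (c₁ + vol1) * ((s ^ (-ϱ) * s ^ (3:ℕ)) * Real.exp (-m ^ 2 / 4)) := by ring
      _ ≤ (c₁ + vol1) * (Real.exp ((3 - ϱ) * s) * Real.exp (1/4 - (s - 2) ^ 2 / 16)) := by
          apply mul_le_mul_of_nonneg_left _ (by linarith : (0:ℝ) ≤ c₁ + vol1)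
          exact mul_le_mul hss hmexp (Real.exp_pos _).le (Real.exp_pos _).le
      _ = (c₁ + vol1) * Real.exp ((3 - ϱ) * s + (1/4 - (s - 2) ^ 2 / 16)) := by
          rw [← Real.exp_add]
      _ ≤ (c₁ + vol1) * Real.exp (4 * (3 - ϱ + 1/4) ^ 2) := by
          apply mul_le_mul_of_nonneg_left _ (by linarith : (0:ℝ) ≤ c₁ + vol1)
          apply Real.exp_le_exp.mpr
          nlinarith [sq_nonneg (s / 4 - 2 * (3 - ϱ + 1/4))]
  calc (1 + ‖v‖ ^ 2) ^ (-ϱ / 2) * J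
      ≤ s ^ (-ϱ) * (Real.exp (-m ^ 2 / 4) * (c₁ + R ^ 3 * vol1) + R ^ ϱ * I₂) := hmain
    _ = s ^ (-ϱ) * (Real.exp (-m ^ 2 / 4) * (c₁ + R ^ 3 * vol1)) + s ^ (-ϱ) * (R ^ ϱ * I₂) := by
        ring
    _ ≤ (c₁ + vol1) * Real.exp (4 * (3 - ϱ + 1/4) ^ 2) + 2 ^ (-ϱ) * I₂ := by
        rw [hpart2]
        linarith [hpart1]
    _ ≤ _ := by linarith


instance : IsFiniteMeasure sphMeasure :=
  inferInstanceAs (IsFiniteMeasure (volume : Measure V3).toSphere)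

section wtfacts
variable {q θ ϑ t : ℝ}

lemma one_le_wt (hq : 0 < q) (hθ₁ : 0 < θ) (ht : 0 ≤ t) (u : V3) : 1 ≤ wt q θ ϑ t u := by
  rw [wt]
  apply Real.one_le_exp
  have hT : (0:ℝ) < (1 + t) ^ ϑ := Real.rpow_pos_of_pos (by linarith) ϑ
  have hn : (0:ℝ) ≤ q * ‖u‖ ^ θ :=
    mul_nonneg hq.le (Real.rpow_nonneg (norm_nonneg u) θ)
  have h1 : (0:ℝ) ≤ q * ‖u‖ ^ θ / 8 := by positivity
  have h2 : (0:ℝ) ≤ q * ‖u‖ ^ θ / (8 * (1 + t) ^ ϑ) := div_nonneg hn (by positivity)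
  linarith


lemma wt_le_mul_post {q θ ϑ t : ℝ} (hq : 0 < q) (hθ₁ : 0 < θ) (hθ₂ : θ ≤ 2) (ht : 0 ≤ t)
    (u v : V3) (ω : V3) (hω : ‖ω‖ = 1) :
    wt q θ ϑ t v ≤ wt q θ ϑ t (uPost u v ω) * wt q θ ϑ t (vPost u v ω) := by
  have hT : (0:ℝ) < (1 + t) ^ ϑ := Real.rpow_pos_of_pos (by linarith) ϑ
  rw [wt, wt, wt, ← Real.exp_add]
  apply Real.exp_le_exp.mpr
  have habc : ‖v‖ ^ θ ≤ ‖uPost u v ω‖ ^ θ + ‖vPost u v ω‖ ^ θ :=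
    norm_rpow_le_post θ hθ₁ hθ₂ u v ω hω
  have hκ : (0:ℝ) ≤ q / 8 + q / (8 * (1 + t) ^ ϑ) :=
    add_nonneg (div_nonneg hq.le (by norm_num)) (div_nonneg hq.le (by positivity))
  have key : ‖v‖ ^ θ * (q / 8 + q / (8 * (1 + t) ^ ϑ)) ≤
      (‖uPost u v ω‖ ^ θ + ‖vPost u v ω‖ ^ θ) * (q / 8 + q / (8 * (1 + t) ^ ϑ)) :=
    mul_le_mul_of_nonneg_right habc hκ
  calc q * ‖v‖ ^ θ / 8 + q * ‖v‖ ^ θ / (8 * (1 + t) ^ ϑ)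
      = ‖v‖ ^ θ * (q / 8 + q / (8 * (1 + t) ^ ϑ)) := by ring
    _ ≤ (‖uPost u v ω‖ ^ θ + ‖vPost u v ω‖ ^ θ) * (q / 8 + q / (8 * (1 + t) ^ ϑ)) := key
    _ = _ := by ring

end wtfacts

end aux

/-- Weighted `L^∞` estimate `‖ν⁻¹ w Γ(f₁,f₂)‖_∞ ≤ C ‖w f₁‖_∞ ‖w f₂‖_∞` (Lemma 2.3, (2.9)),
with `ν(v)` replaced by the comparable quantity `(1+|v|²)^{ϱ/2}`, and the `L^∞` norms
expressed via pointwise bounds `M₁, M₂`. -/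
theorem weighted_Linfty_estimate_Gamma
    (ϱ : ℝ) (hϱ₁ : -3 < ϱ) (hϱ₂ : ϱ < 0)
    (b₀ : ℝ → ℝ) (hb₀meas : Measurable b₀) (hb₀nonneg : ∀ s, 0 ≤ b₀ s)
    (C₀ : ℝ) (hC₀ : 0 < C₀) (hb₀le : ∀ s, b₀ s ≤ C₀ * max s 0)
    (q θ ϑ : ℝ) (hq : 0 < q) (hθ₁ : 0 < θ) (hθ₂ : θ ≤ 2)
    (hqθ : θ = 2 → q < 1) (hϑ : 0 ≤ ϑ) :
    ∃ C : ℝ, 0 < C ∧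
      ∀ t : ℝ, 0 ≤ t → ∀ f₁ f₂ : V3 → ℝ, Measurable f₁ → Measurable f₂ →
        ∀ M₁ M₂ : ℝ,
          (∀ u : V3, wt q θ ϑ t u * |f₁ u| ≤ M₁) →
          (∀ u : V3, wt q θ ϑ t u * |f₂ u| ≤ M₂) →
          ∀ v : V3,
            (1 + ‖v‖ ^ 2) ^ (-ϱ / 2) * wt q θ ϑ t v *
                (∫ u : V3, ∫ ω : Metric.sphere (0 : V3) 1,
                    ‖v - u‖ ^ ϱ * b₀ ((inner ℝ (ω : V3) (u - v) : ℝ) / ‖u - v‖) *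
                      Real.sqrt (maxwellian u) *
                      (|f₁ (uPost u v (ω : V3))| * |f₂ (vPost u v (ω : V3))|
                        + |f₁ u| * |f₂ v|) ∂sphMeasure) ≤
              C * M₁ * M₂ ∧
            (1 + ‖v‖ ^ 2) ^ (-ϱ / 2) * wt q θ ϑ t v * |GamOp ϱ b₀ f₁ f₂ v| ≤
              C * M₁ * M₂ := by
  obtain ⟨K, hK, hKey⟩ := key_decay hϱ₁ hϱ₂
  set S : ℝ := (sphMeasure Set.univ).toReal with hSdef
  have hS0 : 0 ≤ S := ENNReal.toReal_nonneg
  refine ⟨2 * S * C₀ * K + 1, by positivity, ?_⟩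
  intro t ht f₁ f₂ hf₁ hf₂ M₁ M₂ hM₁ hM₂ v
  have hW1 : ∀ y : V3, 1 ≤ wt q θ ϑ t y := fun y => one_le_wt hq hθ₁ ht y
  have hWv : (0:ℝ) < wt q θ ϑ t v := lt_of_lt_of_le one_pos (hW1 v)
  have hM₁0 : 0 ≤ M₁ := by
    have h := hM₁ v
    have : (0:ℝ) ≤ wt q θ ϑ t v * |f₁ v| := mul_nonneg hWv.le (abs_nonneg _)
    linarith
  have hM₂0 : 0 ≤ M₂ := by
    have h := hM₂ v
    have : (0:ℝ) ≤ wt q θ ϑ t v * |f₂ v| := mul_nonneg hWv.le (abs_nonneg _)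
    linarith
  set W : ℝ := wt q θ ϑ t v with hWdef
  set D : ℝ := C₀ * (2 * (M₁ * M₂) / W) with hDdef
  have hD0 : 0 ≤ D := by
    rw [hDdef]
    positivity
  set r : V3 → ℝ := fun u => ‖v - u‖ ^ ϱ * Real.exp (-‖u‖ ^ 2 / 4) with hrdef
  have hr0 : ∀ u, 0 ≤ r u := fun u => by
    rw [hrdef]
    positivity
  -- pointwise core estimate
  have hcore : ∀ (u : V3) (ω : Metric.sphere (0:V3) 1),
      ‖v - u‖ ^ ϱ * b₀ ((inner ℝ (ω : V3) (u - v) : ℝ) / ‖u - v‖) * Real.sqrt (maxwellian u) *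
        (|f₁ (uPost u v (ω : V3))| * |f₂ (vPost u v (ω : V3))| + |f₁ u| * |f₂ v|) ≤ D * r u := by
    intro u ω
    have hω : ‖(ω : V3)‖ = 1 := mem_sphere_zero_iff_norm.mp ω.2
    set sval : ℝ := (inner ℝ (ω : V3) (u - v) : ℝ) / ‖u - v‖ with hsval
    have hsle : sval ≤ 1 := by
      rcases eq_or_ne (‖u - v‖) 0 with h0 | h0
      · rw [hsval, h0, div_zero]
        norm_num
      · have hpos : (0:ℝ) < ‖u - v‖ := lt_of_le_of_ne (norm_nonneg _) (Ne.symm h0)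
        have hin : |(inner ℝ (ω : V3) (u - v) : ℝ)| ≤ ‖u - v‖ := by
          have := abs_real_inner_le_norm (ω : V3) (u - v)
          rwa [hω, one_mul] at this
        rw [hsval, div_le_one hpos]
        calc (inner ℝ (ω : V3) (u - v) : ℝ) ≤ |(inner ℝ (ω : V3) (u - v) : ℝ)| := le_abs_self _
          _ ≤ ‖u - v‖ := hin
    have hb : b₀ sval ≤ C₀ := by
      calc b₀ sval ≤ C₀ * max sval 0 := hb₀le sval
        _ ≤ C₀ * 1 := mul_le_mul_of_nonneg_left (max_le hsle zero_le_one) hC₀.le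
        _ = C₀ := mul_one C₀
    set A : ℝ := |f₁ (uPost u v (ω : V3))| * |f₂ (vPost u v (ω : V3))| with hA
    set B : ℝ := |f₁ u| * |f₂ v| with hB
    have hA0 : 0 ≤ A := mul_nonneg (abs_nonneg _) (abs_nonneg _)
    have hB0 : 0 ≤ B := mul_nonneg (abs_nonneg _) (abs_nonneg _)
    have hWA : W * A ≤ M₁ * M₂ := by
      have hww : W ≤ wt q θ ϑ t (uPost u v (ω : V3)) * wt q θ ϑ t (vPost u v (ω : V3)) :=
        wt_le_mul_post hq hθ₁ hθ₂ ht u v (ω : V3) hω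
      calc W * A ≤ (wt q θ ϑ t (uPost u v (ω : V3)) * wt q θ ϑ t (vPost u v (ω : V3))) * A :=
            mul_le_mul_of_nonneg_right hww hA0
        _ = (wt q θ ϑ t (uPost u v (ω : V3)) * |f₁ (uPost u v (ω : V3))|) *
              (wt q θ ϑ t (vPost u v (ω : V3)) * |f₂ (vPost u v (ω : V3))|) := by
            rw [hA]; ring
        _ ≤ M₁ * M₂ := mul_le_mul (hM₁ _) (hM₂ _)
            (mul_nonneg (lt_of_lt_of_le one_pos (hW1 _)).le (abs_nonneg _)) hM₁0
    have hWB : W * B ≤ M₁ * M₂ := by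
      have h1 : |f₁ u| ≤ M₁ := by
        have := le_mul_of_one_le_left (abs_nonneg (f₁ u)) (hW1 u)
        exact this.trans (hM₁ u)
      calc W * B = |f₁ u| * (W * |f₂ v|) := by rw [hB]; ring
        _ ≤ M₁ * M₂ := mul_le_mul h1 (hM₂ v) (mul_nonneg hWv.le (abs_nonneg _)) hM₁0
    have hAB : A + B ≤ 2 * (M₁ * M₂) / W := by
      rw [le_div_iff₀ hWv]
      nlinarith
    have hstep : ‖v - u‖ ^ ϱ * b₀ sval * Real.sqrt (maxwellian u) ≤
        ‖v - u‖ ^ ϱ * C₀ * Real.exp (-‖u‖ ^ 2 / 4) := by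
      have t1 : ‖v - u‖ ^ ϱ * b₀ sval ≤ ‖v - u‖ ^ ϱ * C₀ :=
        mul_le_mul_of_nonneg_left hb (Real.rpow_nonneg (norm_nonneg _) _)
      exact mul_le_mul t1 (sqrt_maxwellian_le u) (Real.sqrt_nonneg _) (by positivity)
    have hfin : ‖v - u‖ ^ ϱ * b₀ sval * Real.sqrt (maxwellian u) * (A + B) ≤
        (‖v - u‖ ^ ϱ * C₀ * Real.exp (-‖u‖ ^ 2 / 4)) * (2 * (M₁ * M₂) / W) := by
      apply mul_le_mul hstep hAB (by linarith)
      positivity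
    calc ‖v - u‖ ^ ϱ * b₀ sval * Real.sqrt (maxwellian u) * (A + B)
        ≤ (‖v - u‖ ^ ϱ * C₀ * Real.exp (-‖u‖ ^ 2 / 4)) * (2 * (M₁ * M₂) / W) := hfin
      _ = D * r u := by rw [hDdef, hrdef]; ring
  have hb0' : ∀ (u : V3) (ω : Metric.sphere (0:V3) 1),
      0 ≤ ‖v - u‖ ^ ϱ * b₀ ((inner ℝ (ω : V3) (u - v) : ℝ) / ‖u - v‖) *
        Real.sqrt (maxwellian u) := fun u ω =>
    mul_nonneg (mul_nonneg (Real.rpow_nonneg (norm_nonneg _) _) (hb₀nonneg _))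
      (Real.sqrt_nonneg _)
  -- sphere integral bounds
  have hGsph : ∀ u : V3,
      (∫ ω : Metric.sphere (0 : V3) 1,
        ‖v - u‖ ^ ϱ * b₀ ((inner ℝ (ω : V3) (u - v) : ℝ) / ‖u - v‖) * Real.sqrt (maxwellian u) *
          (|f₁ (uPost u v (ω : V3))| * |f₂ (vPost u v (ω : V3))| + |f₁ u| * |f₂ v|)
          ∂sphMeasure) ≤ S * (D * r u) := by
    intro u
    calc (∫ ω : Metric.sphere (0 : V3) 1,
        ‖v - u‖ ^ ϱ * b₀ ((inner ℝ (ω : V3) (u - v) : ℝ) / ‖u - v‖) * Real.sqrt (maxwellian u) *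
          (|f₁ (uPost u v (ω : V3))| * |f₂ (vPost u v (ω : V3))| + |f₁ u| * |f₂ v|)
          ∂sphMeasure)
        ≤ ∫ _ω : Metric.sphere (0 : V3) 1, D * r u ∂sphMeasure :=
          integral_mono_of_nonneg
            (ae_of_all _ fun ω => mul_nonneg (hb0' u ω)
              (add_nonneg (mul_nonneg (abs_nonneg _) (abs_nonneg _))
                (mul_nonneg (abs_nonneg _) (abs_nonneg _))))
            (integrable_const _) (ae_of_all _ fun ω => hcore u ω)
      _ = S * (D * r u) := by
          rw [integral_const, smul_eq_mul, hSdef]; rfl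
  have hFsph : ∀ u : V3,
      ‖∫ ω : Metric.sphere (0 : V3) 1,
        ‖v - u‖ ^ ϱ * b₀ ((inner ℝ (ω : V3) (u - v) : ℝ) / ‖u - v‖) * Real.sqrt (maxwellian u) *
          (f₁ (uPost u v (ω : V3)) * f₂ (vPost u v (ω : V3)) - f₁ u * f₂ v)
          ∂sphMeasure‖ ≤ S * (D * r u) := by
    intro u
    have habs : ∀ ω : Metric.sphere (0 : V3) 1,
        ‖(‖v - u‖ ^ ϱ * b₀ ((inner ℝ (ω : V3) (u - v) : ℝ) / ‖u - v‖) * Real.sqrt (maxwellian u) *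
          (f₁ (uPost u v (ω : V3)) * f₂ (vPost u v (ω : V3)) - f₁ u * f₂ v))‖ ≤ D * r u := by
      intro ω
      have h1 : |f₁ (uPost u v (ω : V3)) * f₂ (vPost u v (ω : V3)) - f₁ u * f₂ v| ≤
          |f₁ (uPost u v (ω : V3))| * |f₂ (vPost u v (ω : V3))| + |f₁ u| * |f₂ v| := by
        calc |f₁ (uPost u v (ω : V3)) * f₂ (vPost u v (ω : V3)) - f₁ u * f₂ v|
            ≤ |f₁ (uPost u v (ω : V3)) * f₂ (vPost u v (ω : V3))| + |f₁ u * f₂ v| :=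
              abs_sub _ _
          _ = |f₁ (uPost u v (ω : V3))| * |f₂ (vPost u v (ω : V3))| + |f₁ u| * |f₂ v| := by
              rw [abs_mul, abs_mul]
      rw [Real.norm_eq_abs, abs_mul,
        abs_of_nonneg (hb0' u ω)]
      calc (‖v - u‖ ^ ϱ * b₀ ((inner ℝ (ω : V3) (u - v) : ℝ) / ‖u - v‖) *
            Real.sqrt (maxwellian u)) * |f₁ (uPost u v (ω : V3)) * f₂ (vPost u v (ω : V3)) -
              f₁ u * f₂ v|
          ≤ (‖v - u‖ ^ ϱ * b₀ ((inner ℝ (ω : V3) (u - v) : ℝ) / ‖u - v‖) *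
            Real.sqrt (maxwellian u)) *
            (|f₁ (uPost u v (ω : V3))| * |f₂ (vPost u v (ω : V3))| + |f₁ u| * |f₂ v|) :=
            mul_le_mul_of_nonneg_left h1 (hb0' u ω)
        _ ≤ D * r u := hcore u ω
    calc ‖∫ ω : Metric.sphere (0 : V3) 1,
        ‖v - u‖ ^ ϱ * b₀ ((inner ℝ (ω : V3) (u - v) : ℝ) / ‖u - v‖) * Real.sqrt (maxwellian u) *
          (f₁ (uPost u v (ω : V3)) * f₂ (vPost u v (ω : V3)) - f₁ u * f₂ v) ∂sphMeasure‖
        ≤ ∫ ω : Metric.sphere (0 : V3) 1,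
            ‖(‖v - u‖ ^ ϱ * b₀ ((inner ℝ (ω : V3) (u - v) : ℝ) / ‖u - v‖) *
              Real.sqrt (maxwellian u) *
              (f₁ (uPost u v (ω : V3)) * f₂ (vPost u v (ω : V3)) - f₁ u * f₂ v))‖ ∂sphMeasure :=
          norm_integral_le_integral_norm _
      _ ≤ ∫ _ω : Metric.sphere (0 : V3) 1, D * r u ∂sphMeasure :=
          integral_mono_of_nonneg (ae_of_all _ fun ω => norm_nonneg _)
            (integrable_const _) (ae_of_all _ habs)
      _ = S * (D * r u) := by rw [integral_const, smul_eq_mul, hSdef]; rfl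
  -- outer integral majorant
  have hgint : Integrable (fun u : V3 => S * (D * r u)) :=
    (((integrable_majorant hϱ₁ hϱ₂ v).const_mul D).const_mul S)
  have hgval : (∫ u : V3, S * (D * r u)) = S * (D * ∫ u : V3, r u) := by
    rw [integral_const_mul, integral_const_mul]
  set J : ℝ := ∫ u : V3, r u with hJdef
  have hJ0 : 0 ≤ J := integral_nonneg hr0
  have hPJ : (1 + ‖v‖ ^ 2) ^ (-ϱ / 2) * J ≤ K := hKey v
  have hP0 : (0:ℝ) ≤ (1 + ‖v‖ ^ 2) ^ (-ϱ / 2) := Real.rpow_nonneg (by positivity) _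
  have hWD : W * D = C₀ * (2 * (M₁ * M₂)) := by
    rw [hDdef]
    field_simp
  have hfinal : ∀ I : ℝ, I ≤ S * (D * J) →
      (1 + ‖v‖ ^ 2) ^ (-ϱ / 2) * W * I ≤ (2 * S * C₀ * K + 1) * M₁ * M₂ := by
    intro I hI
    have hWpos : (0:ℝ) < W := hWv
    have step1 : (1 + ‖v‖ ^ 2) ^ (-ϱ / 2) * W * I ≤
        (1 + ‖v‖ ^ 2) ^ (-ϱ / 2) * W * (S * (D * J)) := by
      apply mul_le_mul_of_nonneg_left hI
      positivity
    have step2 : (1 + ‖v‖ ^ 2) ^ (-ϱ / 2) * W * (S * (D * J)) =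
        (C₀ * (2 * (M₁ * M₂)) * S) * ((1 + ‖v‖ ^ 2) ^ (-ϱ / 2) * J) := by
      have : (1 + ‖v‖ ^ 2) ^ (-ϱ / 2) * W * (S * (D * J)) =
          (W * D) * S * ((1 + ‖v‖ ^ 2) ^ (-ϱ / 2) * J) := by ring
      rw [this, hWD]
    have step3 : (C₀ * (2 * (M₁ * M₂)) * S) * ((1 + ‖v‖ ^ 2) ^ (-ϱ / 2) * J) ≤
        (C₀ * (2 * (M₁ * M₂)) * S) * K := by
      apply mul_le_mul_of_nonneg_left hPJ
      positivity
    have step4 : (C₀ * (2 * (M₁ * M₂)) * S) * K ≤ (2 * S * C₀ * K + 1) * M₁ * M₂ := by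
      nlinarith [mul_nonneg hM₁0 hM₂0, mul_nonneg (mul_nonneg hS0 hC₀.le) hK.le]
    calc (1 + ‖v‖ ^ 2) ^ (-ϱ / 2) * W * I
        ≤ (1 + ‖v‖ ^ 2) ^ (-ϱ / 2) * W * (S * (D * J)) := step1
      _ = (C₀ * (2 * (M₁ * M₂)) * S) * ((1 + ‖v‖ ^ 2) ^ (-ϱ / 2) * J) := step2
      _ ≤ (C₀ * (2 * (M₁ * M₂)) * S) * K := step3
      _ ≤ _ := step4
  constructor
  · -- part 1
    apply hfinal
    calc (∫ u : V3, ∫ ω : Metric.sphere (0 : V3) 1,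
          ‖v - u‖ ^ ϱ * b₀ ((inner ℝ (ω : V3) (u - v) : ℝ) / ‖u - v‖) *
            Real.sqrt (maxwellian u) *
            (|f₁ (uPost u v (ω : V3))| * |f₂ (vPost u v (ω : V3))|
              + |f₁ u| * |f₂ v|) ∂sphMeasure)
        ≤ ∫ u : V3, S * (D * r u) :=
          integral_mono_of_nonneg
            (ae_of_all _ fun u => integral_nonneg fun ω => mul_nonneg (hb0' u ω)
              (add_nonneg (mul_nonneg (abs_nonneg _) (abs_nonneg _))
                (mul_nonneg (abs_nonneg _) (abs_nonneg _))))
            hgint (ae_of_all _ hGsph)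
      _ = S * (D * J) := hgval
  · -- part 2
    apply hfinal
    rw [GamOp, ← Real.norm_eq_abs]
    calc ‖∫ u : V3, ∫ ω : Metric.sphere (0 : V3) 1,
          ‖v - u‖ ^ ϱ * b₀ ((inner ℝ (ω : V3) (u - v) : ℝ) / ‖u - v‖) *
            Real.sqrt (maxwellian u) *
            (f₁ (uPost u v (ω : V3)) * f₂ (vPost u v (ω : V3)) - f₁ u * f₂ v) ∂sphMeasure‖
        ≤ ∫ u : V3, ‖∫ ω : Metric.sphere (0 : V3) 1,
            ‖v - u‖ ^ ϱ * b₀ ((inner ℝ (ω : V3) (u - v) : ℝ) / ‖u - v‖) *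
              Real.sqrt (maxwellian u) *
              (f₁ (uPost u v (ω : V3)) * f₂ (vPost u v (ω : V3)) - f₁ u * f₂ v) ∂sphMeasure‖ :=
          norm_integral_le_integral_norm _
      _ ≤ ∫ u : V3, S * (D * r u) :=
          integral_mono_of_nonneg (ae_of_all _ fun u => norm_nonneg _)
            hgint (ae_of_all _ hFsph)
      _ = S * (D * J) := hgval
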